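/- arXiv:1207.6680 — 3 statements merged into one kernel-verified Lean document; each statement's English description precedes it below -/
import Mathlib

section
/- Let 0 < r < 1 and let r_1,...,r_N ∈ (0,1) with each r_j = r^{k_j} for positive integers k_j. Then there is a unique real number D such that ∑_{j=1}^N r_j^D = 1; moreover D = -log_r φ where φ is the unique positive real root of x^k = a_1 x^{k-1} + ... + a_k, with k = max_j k_j and a_q = #{j : k_j = q}. -/
theorem stmt_3 (N : ℕ) (hN : 2 ≤ N) (r : ℝ) (hr0 : 0 < r) (hr1 : r < 1)
    (k : Fin N → ℕ) (hk : ∀ j, 0 < k j) :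
    (∃! D : ℝ, ∑ j : Fin N, ((r ^ k j : ℝ)) ^ D = 1) ∧
    ∀ φ : ℝ, 0 < φ →
      φ ^ (Finset.univ.sup k) =
        ∑ q ∈ Finset.range (Finset.univ.sup k),
          (((Finset.univ.filter fun j : Fin N => k j = q + 1).card : ℝ)) *
            φ ^ (Finset.univ.sup k - (q + 1)) →
      ∑ j : Fin N, ((r ^ k j : ℝ)) ^ (-(Real.logb r φ)) = 1 := by
  have hNpos : 0 < N := by omega
  have hne : (Finset.univ : Finset (Fin N)).Nonempty := ⟨⟨0, hNpos⟩, Finset.mem_univ _⟩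
  have hc0 : ∀ j : Fin N, (0:ℝ) < r ^ k j := fun j => pow_pos hr0 _
  have hc1 : ∀ j : Fin N, (r:ℝ) ^ k j < 1 := fun j => pow_lt_one₀ hr0.le hr1 (hk j).ne'
  set f : ℝ → ℝ := fun D => ∑ j : Fin N, ((r ^ k j : ℝ)) ^ D with hf
  constructor
  · -- existence and uniqueness
    have hanti : StrictAnti f := by
      intro x y hxy
      exact Finset.sum_lt_sum_of_nonempty hne fun j _ =>
        Real.rpow_lt_rpow_of_exponent_gt (hc0 j) (hc1 j) hxy
    have hcont : Continuous f := by
      apply continuous_finset_sum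
      intro j _
      have h : (fun D : ℝ => ((r ^ k j : ℝ)) ^ D)
          = fun D => Real.exp (Real.log (r ^ k j) * D) := by
        funext D; rw [Real.rpow_def_of_pos (hc0 j)]
      show Continuous fun D : ℝ => ((r ^ k j : ℝ)) ^ D
      rw [h]
      exact Real.continuous_exp.comp (continuous_const.mul continuous_id)
    have htend : Filter.Tendsto f Filter.atTop (nhds 0) := by
      have h0 : (0:ℝ) = ∑ _j : Fin N, 0 := by simp
      rw [h0]
      apply tendsto_finset_sum
      intro j _
      exact tendsto_rpow_atTop_of_base_lt_one _ (by linarith [hc0 j]) (hc1 j)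
    have hf0 : f 0 = N := by simp [hf]
    obtain ⟨M, hM1, hM0⟩ :=
      ((htend.eventually_lt_const one_pos).and (Filter.eventually_ge_atTop (0:ℝ))).exists
    have hmem : (1:ℝ) ∈ Set.Icc (f M) (f 0) := by
      constructor
      · exact hM1.le
      · rw [hf0]; exact_mod_cast by exact_mod_cast (by exact_mod_cast Nat.one_le_iff_ne_zero.mpr (by omega) : (1:ℕ) ≤ N)
    obtain ⟨D, _, hD⟩ := intermediate_value_Icc' hM0 hcont.continuousOn hmem
    exact ⟨D, hD, fun y hy => hanti.injective (hy.trans hD.symm)⟩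
  · -- second part
    intro φ hφ hchar
    have hlogr : Real.log r ≠ 0 := ne_of_lt (Real.log_neg hr0 hr1)
    have hterm : ∀ j : Fin N, ((r ^ k j : ℝ)) ^ (-(Real.logb r φ)) = φ ^ (-(k j : ℝ)) := by
      intro j
      rw [Real.rpow_def_of_pos (hc0 j), Real.rpow_def_of_pos hφ, Real.log_pow, Real.logb]
      congr 1
      field_simp
    have hkK : ∀ j : Fin N, k j ≤ Finset.univ.sup k := fun j => Finset.le_sup (Finset.mem_univ j)
    set K := Finset.univ.sup k with hK
    have key : (∑ j : Fin N, φ ^ (-(k j : ℝ))) = 1 := by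
      have hφK : (φ:ℝ) ^ K ≠ 0 := pow_ne_zero K hφ.ne'
      have h1 : (∑ j : Fin N, φ ^ (-(k j : ℝ))) * φ ^ K = φ ^ K := by
        rw [Finset.sum_mul]
        have hterm2 : ∀ j : Fin N, φ ^ (-(k j : ℝ)) * φ ^ K = φ ^ (K - k j) := by
          intro j
          rw [← Real.rpow_natCast φ K, ← Real.rpow_natCast φ (K - k j),
            ← Real.rpow_add hφ]
          congr 1
          rw [Nat.cast_sub (hkK j)]
          ring
        simp_rw [hterm2]
        rw [hchar]
        rw [← Finset.sum_fiberwise_of_maps_to (g := fun j : Fin N => k j - 1)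
          (t := Finset.range K) (fun j _ => Finset.mem_range.mpr (show k j - 1 < K by
            have := hk j; have := hkK j; omega))]
        apply Finset.sum_congr rfl
        intro q _
        have hfe : (Finset.univ.filter fun j : Fin N => k j - 1 = q)
            = (Finset.univ.filter fun j : Fin N => k j = q + 1) := by
          apply Finset.filter_congr
          intro j _
          have := hk j
          constructor <;> intro h <;> omega
        rw [hfe]
        have hcc : ∀ j ∈ Finset.univ.filter (fun j : Fin N => k j = q + 1),
            φ ^ (K - k j) = φ ^ (K - (q + 1)) := by
          intro j hj
          rw [Finset.mem_filter] at hj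
          rw [hj.2]
        rw [Finset.sum_congr rfl hcc, Finset.sum_const, nsmul_eq_mul]
      exact mul_right_cancel₀ hφK (by rw [h1, one_mul])
    simp_rw [hterm]
    exact key
end

section
/- A complex number s satisfies 2^{-s} + 4^{-s} = 1 if and only if s = log_2 φ + i·(2π/log 2)·z for some integer z, or s = -log_2 φ + i·(2π/log 2)·(z + 1/2) for some integer z, where φ = (1+√5)/2. -/
open Complex

theorem stmt_9 :
    ∀ s : ℂ, ((2 : ℂ) ^ (-s) + (4 : ℂ) ^ (-s) = 1 ↔
      ((∃ z : ℤ, s = (Real.logb 2 ((1 + Real.sqrt 5) / 2) : ℂ) +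
          Complex.I * ((2 * Real.pi / Real.log 2 : ℝ) : ℂ) * (z : ℂ)) ∨
       (∃ z : ℤ, s = -(Real.logb 2 ((1 + Real.sqrt 5) / 2) : ℂ) +
          Complex.I * ((2 * Real.pi / Real.log 2 : ℝ) : ℂ) * ((z : ℂ) + 1 / 2)))) := by
  intro s
  have h5 : (0:ℝ) ≤ 5 := by norm_num
  have hsq : Real.sqrt 5 ^ 2 = 5 := Real.sq_sqrt h5
  have hs2 : 2 < Real.sqrt 5 := by nlinarith [Real.sqrt_nonneg 5]
  set φ : ℝ := (1 + Real.sqrt 5) / 2 with hφdef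
  have hφpos : 0 < φ := by rw [hφdef]; nlinarith
  have hL : Real.log 2 ≠ 0 := ne_of_gt (Real.log_pos one_lt_two)
  have hLc : (Real.log 2 : ℂ) ≠ 0 := by exact_mod_cast hL
  set c : ℂ := ((Real.log 2 : ℝ) : ℂ) with hc
  set w : ℂ := Complex.exp (c * (-s)) with hw
  have h2 : (2:ℂ) ^ (-s) = w := by
    rw [Complex.cpow_def_of_ne_zero (by norm_num)]
    rw [show (2:ℂ) = ((2:ℝ):ℂ) by norm_num, ← Complex.ofReal_log (by norm_num : (0:ℝ) ≤ 2)]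
  have h4 : (4:ℂ) ^ (-s) = w ^ 2 := by
    rw [Complex.cpow_def_of_ne_zero (by norm_num)]
    rw [show (4:ℂ) = ((4:ℝ):ℂ) by norm_num, ← Complex.ofReal_log (by norm_num : (0:ℝ) ≤ 4)]
    rw [show Real.log 4 = 2 * Real.log 2 by
      rw [show (4:ℝ) = 2^2 by norm_num, Real.log_pow]; push_cast; ring]
    rw [hw, ← Complex.exp_nat_mul]
    congr 1
    push_cast
    ring
  set A : ℂ := (((Real.sqrt 5 - 1) / 2 : ℝ) : ℂ) with hA
  set B : ℂ := ((-φ : ℝ) : ℂ) with hB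
  have hScsq : ((Real.sqrt 5 : ℝ) : ℂ) ^ 2 = 5 := by exact_mod_cast congrArg (Complex.ofReal) hsq
  have hfact : ∀ v : ℂ, v + v ^ 2 - 1 = (v - A) * (v - B) := by
    intro v
    rw [hA, hB, hφdef]
    push_cast
    linear_combination ((1:ℂ)/4) * hScsq
  have hquad : (2:ℂ) ^ (-s) + (4:ℂ) ^ (-s) = 1 ↔ (w = A ∨ w = B) := by
    rw [h2, h4, ← sub_eq_zero, hfact w, mul_eq_zero, sub_eq_zero, sub_eq_zero]
  -- logs
  have hApos : (0:ℝ) < (Real.sqrt 5 - 1) / 2 := by nlinarith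
  have hAne : A ≠ 0 := by
    rw [hA]; exact_mod_cast ne_of_gt hApos
  have hBne : B ≠ 0 := by
    rw [hB]; simpa using ne_of_gt hφpos
  have hlogA : Complex.log A = (-(Real.log φ) : ℝ) := by
    rw [hA, ← Complex.ofReal_log (le_of_lt hApos)]
    congr 1
    rw [show (Real.sqrt 5 - 1)/2 = φ⁻¹ from eq_inv_of_mul_eq_one_left (by rw [hφdef]; nlinarith)]
    exact Real.log_inv φ
  have hlogB : Complex.log B = (Real.log φ : ℝ) + Real.pi * I := by
    apply Complex.ext
    · rw [Complex.log_re, hB]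
      simp [Complex.norm_real, abs_of_pos hφpos]
    · rw [Complex.log_im, hB]
      rw [Complex.arg_ofReal_of_neg (by linarith)]
      simp
  have hlogbc : (Real.logb 2 φ : ℂ) = (Real.log φ : ℂ) / c := by
    rw [Real.logb, hc]; push_cast; ring
  have hπc : ((2 * Real.pi / Real.log 2 : ℝ) : ℂ) = 2 * (Real.pi : ℂ) / c := by
    rw [hc]; push_cast; ring
  constructor
  · intro h
    rcases hquad.mp h with hwa | hwb
    · left
      rw [hw] at hwa
      rw [← Complex.exp_log hAne, Complex.exp_eq_exp_iff_exists_int] at hwa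
      obtain ⟨n, hn⟩ := hwa
      rw [hlogA] at hn
      refine ⟨-n, ?_⟩
      rw [hlogbc, hπc]
      push_cast at hn ⊢
      field_simp
      linear_combination -hn
    · right
      rw [hw] at hwb
      rw [← Complex.exp_log hBne, Complex.exp_eq_exp_iff_exists_int] at hwb
      obtain ⟨n, hn⟩ := hwb
      rw [hlogB] at hn
      refine ⟨-n - 1, ?_⟩
      rw [hlogbc, hπc]
      push_cast at hn ⊢
      field_simp
      linear_combination -hn
  · intro h
    apply hquad.mpr
    rcases h with ⟨z, hz⟩ | ⟨z, hz⟩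
    · left
      rw [hw, ← Complex.exp_log hAne, Complex.exp_eq_exp_iff_exists_int]
      refine ⟨-z, ?_⟩
      rw [hlogA, hlogbc, hπc] at *
      rw [hz]
      push_cast
      field_simp
      ring
    · right
      rw [hw, ← Complex.exp_log hBne, Complex.exp_eq_exp_iff_exists_int]
      refine ⟨-z - 1, ?_⟩
      rw [hlogB, hlogbc, hπc] at *
      rw [hz]
      push_cast
      field_simp
      ring
end

section
/- Let N ≥ 2, k = (k_1,...,k_N) a vector of nonnegative integers, not all zero, K = ∑ k_j, and r_1,...,r_N ∈ (0,1). For real s, the series ∑_{n=1}^∞ C(nK; nk_1,...,nk_N) · (r_1^{k_1}···r_N^{k_N})^{ns} (multinomial coefficients) converges if s > ρ and diverges if s < ρ, where ρ = log( k_1^{k_1}···k_N^{k_N} / K^K ) / log( r_1^{k_1}···r_N^{k_N} ) (with the convention 0^0 = 1). -/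
open Real Finset

lemma fact_pow_le (m : ℕ) : (m:ℝ)^m ≤ Real.exp m * (m.factorial : ℝ) := by
  have h := Real.pow_div_factorial_le_exp (x := (m:ℝ)) (Nat.cast_nonneg m) m
  have hf : (0:ℝ) < (m.factorial : ℝ) := by positivity
  rw [div_le_iff₀ hf] at h
  calc (m:ℝ)^m ≤ Real.exp m * (m.factorial : ℝ) := by linarith [h]

lemma exp_le_succ_div (m : ℕ) (hm : 1 ≤ m) :
    Real.exp 1 ≤ (((m:ℝ)+1)/m) ^ (m+1) := by
  have hm' : (1:ℝ) ≤ (m:ℝ) := by exact_mod_cast hm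
  have hm0 : (0:ℝ) < m := by linarith
  have h1 : Real.exp (-(1/((m:ℝ)+1))) ≥ 1 - 1/((m:ℝ)+1) := by
    have := Real.add_one_le_exp (-(1/((m:ℝ)+1)))
    linarith
  have h2 : (m:ℝ)/((m:ℝ)+1) ≤ Real.exp (-(1/((m:ℝ)+1))) := by
    have : (m:ℝ)/((m:ℝ)+1) = 1 - 1/((m:ℝ)+1) := by field_simp; ring
    linarith [h1, this.ge]
  have h3 : Real.exp (1/((m:ℝ)+1)) ≤ ((m:ℝ)+1)/m := by
    rw [Real.exp_neg, inv_eq_one_div, div_le_div_iff₀ (by positivity) (Real.exp_pos _)] at h2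
    rw [le_div_iff₀ hm0]
    nlinarith [h2]
  have h4 : Real.exp 1 = (Real.exp (1/((m:ℝ)+1)))^(m+1) := by
    rw [← Real.exp_nat_mul]
    congr 1
    push_cast
    field_simp
  rw [h4]
  exact pow_le_pow_left₀ (Real.exp_pos _).le h3 _

lemma fact_le (m : ℕ) (hm : 1 ≤ m) :
    (m.factorial : ℝ) * Real.exp m ≤ Real.exp 1 * m * (m:ℝ)^m := by
  induction m, hm using Nat.le_induction with
  | base => simp
  | succ m hm ih =>
    have hm0 : (0:ℝ) < m := by exact_mod_cast hm
    have key : Real.exp 1 * (m:ℝ) * (m:ℝ)^m ≤ ((m:ℝ)+1)^(m+1) := by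
      have h := exp_le_succ_div m hm
      have h2 : Real.exp 1 * (m:ℝ)^(m+1) ≤ (((m:ℝ)+1)/m)^(m+1) * (m:ℝ)^(m+1) := by
        have : (0:ℝ) ≤ (m:ℝ)^(m+1) := by positivity
        nlinarith [pow_pos hm0 (m+1)]
      calc Real.exp 1 * (m:ℝ) * (m:ℝ)^m = Real.exp 1 * (m:ℝ)^(m+1) := by ring
        _ ≤ (((m:ℝ)+1)/m)^(m+1) * (m:ℝ)^(m+1) := h2
        _ = ((m:ℝ)+1)^(m+1) := by
            rw [div_pow, div_mul_cancel₀]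
            positivity
    have e1 : (0:ℝ) < Real.exp 1 := Real.exp_pos _
    have step1 : ((m:ℝ)+1) * ((m.factorial:ℝ) * Real.exp m) * Real.exp 1
        ≤ ((m:ℝ)+1) * (Real.exp 1 * m * (m:ℝ)^m) * Real.exp 1 :=
      mul_le_mul_of_nonneg_right (mul_le_mul_of_nonneg_left ih (by positivity)) e1.le
    have step2 : ((m:ℝ)+1) * (Real.exp 1 * m * (m:ℝ)^m) * Real.exp 1
        ≤ ((m:ℝ)+1) * (((m:ℝ)+1)^(m+1)) * Real.exp 1 :=
      mul_le_mul_of_nonneg_right (mul_le_mul_of_nonneg_left key (by positivity)) e1.le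
    have lhs_eq : (((m+1).factorial:ℝ)) * Real.exp ((m+1:ℕ):ℝ)
        = ((m:ℝ)+1) * ((m.factorial:ℝ) * Real.exp m) * Real.exp 1 := by
      push_cast [Nat.factorial_succ, Real.exp_add]; ring
    have rhs_eq : Real.exp 1 * ((m+1:ℕ):ℝ) * ((m+1:ℕ):ℝ)^(m+1)
        = ((m:ℝ)+1) * (((m:ℝ)+1)^(m+1)) * Real.exp 1 := by push_cast; ring
    rw [lhs_eq, rhs_eq]
    exact le_trans step1 step2

section MBounds
variable {N : ℕ} (k : Fin N → ℕ) (K : ℕ) (m : ℕ)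

lemma sum_mk (hK : K = ∑ j, k j) : ∑ j, m * k j = m * K := by
  rw [hK, Finset.mul_sum]

lemma AF_eq (hK : K = ∑ j, k j) :
    (Nat.multinomial Finset.univ (fun j => m * k j) : ℝ) *
      (∏ j, ((m * k j).factorial : ℝ)) = (((m*K).factorial : ℝ)) := by
  have h := Nat.multinomial_spec (Finset.univ) (fun j : Fin N => m * k j)
  rw [sum_mk k K m hK] at h
  push_cast [← h]
  ring

lemma prodpow_eq : ∏ j, ((m * k j : ℕ):ℝ)^(m * k j)
    = (m:ℝ)^(∑ j, m * k j) * (∏ j, (k j:ℝ)^(k j))^m := by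
  rw [← Finset.prod_pow_eq_pow_sum, ← Finset.prod_pow, ← Finset.prod_mul_distrib]
  refine Finset.prod_congr rfl (fun j _ => ?_)
  push_cast [mul_pow]
  rw [pow_mul' ((k j : ℝ)) m (k j)]

lemma KKpow_eq : ((m*K : ℕ):ℝ)^(m*K) = (m:ℝ)^(m*K) * (((K:ℝ)^K))^m := by
  push_cast [mul_pow]
  rw [pow_mul' ((K : ℝ)) m K]

lemma mult_ub (hK : K = ∑ j, k j) (hKpos : 0 < K) (hm : 1 ≤ m) :
    (Nat.multinomial Finset.univ (fun j => m * k j) : ℝ) * (∏ j, (k j:ℝ)^(k j))^m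
      ≤ Real.exp 1 * ((m*K : ℕ):ℝ) * ((K:ℝ)^K)^m := by
  set A := (Nat.multinomial Finset.univ (fun j => m * k j) : ℝ) with hA
  set F := ∏ j, ((m * k j).factorial : ℝ) with hF
  set P := ∏ j, (k j:ℝ)^(k j) with hP
  set E := Real.exp ((m*K : ℕ):ℝ) with hE
  have hA0 : (0:ℝ) ≤ A := Nat.cast_nonneg _
  have hE0 : (0:ℝ) < E := Real.exp_pos _
  have hm0 : (0:ℝ) < (m:ℝ) := by exact_mod_cast hm
  have hmK1 : 1 ≤ m * K := Nat.one_le_iff_ne_zero.2 (by positivity)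
  have hEsum : ∏ j, Real.exp (((m * k j : ℕ):ℝ)) = E := by
    rw [hE, ← Real.exp_sum]
    congr 1
    rw [← Nat.cast_sum, sum_mk k K m hK]
  have h1 : (m:ℝ)^(m*K) * P^m ≤ E * F := by
    rw [← sum_mk k K m hK, ← prodpow_eq]
    calc ∏ j, ((m * k j : ℕ):ℝ)^(m * k j)
        ≤ ∏ j, (Real.exp (((m * k j : ℕ):ℝ)) * (((m * k j).factorial : ℕ):ℝ)) :=
          Finset.prod_le_prod (fun j _ => by positivity) (fun j _ => fact_pow_le _)
      _ = E * F := by rw [Finset.prod_mul_distrib, hEsum]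
  have h2 : ((m*K).factorial:ℝ) * E ≤ Real.exp 1 * ((m*K:ℕ):ℝ) * ((m*K:ℕ):ℝ)^(m*K) :=
    fact_le (m*K) hmK1
  have hc : (0:ℝ) < (m:ℝ)^(m*K) * E := by positivity
  rw [← mul_le_mul_iff_of_pos_right hc]
  calc A * P^m * ((m:ℝ)^(m*K) * E)
      = A * ((m:ℝ)^(m*K) * P^m) * E := by ring
    _ ≤ A * (E * F) * E := by
        have := mul_le_mul_of_nonneg_left h1 hA0
        exact mul_le_mul_of_nonneg_right this hE0.le
    _ = (A * F) * E * E := by ring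
    _ = ((m*K).factorial:ℝ) * E * E := by rw [AF_eq k K m hK]
    _ ≤ (Real.exp 1 * ((m*K:ℕ):ℝ) * ((m*K:ℕ):ℝ)^(m*K)) * E :=
        mul_le_mul_of_nonneg_right h2 hE0.le
    _ = Real.exp 1 * ((m*K : ℕ):ℝ) * ((K:ℝ)^K)^m * ((m:ℝ)^(m*K) * E) := by
        rw [KKpow_eq]; ring

lemma mult_lb (hK : K = ∑ j, k j) (hKpos : 0 < K) (hm : 1 ≤ m) :
    ((K:ℝ)^K)^m ≤ (Nat.multinomial Finset.univ (fun j => m * k j) : ℝ)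
      * (∏ j, (k j:ℝ)^(k j))^m * (Real.exp 1 * m * K)^N := by
  set A := (Nat.multinomial Finset.univ (fun j => m * k j) : ℝ) with hA
  set F := ∏ j, ((m * k j).factorial : ℝ) with hF
  set P := ∏ j, (k j:ℝ)^(k j) with hP
  set E := Real.exp ((m*K : ℕ):ℝ) with hE
  set c := Real.exp 1 * (m:ℝ) * (K:ℝ) with hcdef
  have hA0 : (0:ℝ) ≤ A := Nat.cast_nonneg _
  have hE0 : (0:ℝ) < E := Real.exp_pos _
  have hm0 : (0:ℝ) < (m:ℝ) := by exact_mod_cast hm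
  have hK0 : (0:ℝ) < (K:ℝ) := by exact_mod_cast hKpos
  have he1 : (1:ℝ) ≤ Real.exp 1 := by
    have := Real.add_one_le_exp (1:ℝ); linarith
  have hm1 : (1:ℝ) ≤ (m:ℝ) := by exact_mod_cast hm
  have hK1 : (1:ℝ) ≤ (K:ℝ) := by exact_mod_cast hKpos
  have hc1 : (1:ℝ) ≤ c := by
    have h1 : (1:ℝ) ≤ Real.exp 1 * (m:ℝ) :=
      le_trans (by norm_num) (mul_le_mul he1 hm1 zero_le_one (le_trans zero_le_one he1))
    rw [hcdef]
    nlinarith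
  have hEsum : ∏ j, Real.exp (((m * k j : ℕ):ℝ)) = E := by
    rw [hE, ← Real.exp_sum]
    congr 1
    rw [← Nat.cast_sum, sum_mk k K m hK]
  have perj : ∀ j, (((m * k j).factorial : ℕ):ℝ) * Real.exp (((m * k j : ℕ):ℝ))
      ≤ c * ((m * k j : ℕ):ℝ)^(m * k j) := by
    intro j
    by_cases h : k j = 0
    · simp [h]
      linarith
    · have hkj1 : 1 ≤ m * k j := Nat.one_le_iff_ne_zero.2 (by positivity)
      have h1 := fact_le (m * k j) hkj1
      have hkjK : ((m * k j : ℕ):ℝ) ≤ (m:ℝ) * (K:ℝ) := by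
        have : k j ≤ K := hK ▸ Finset.single_le_sum (fun i _ => Nat.zero_le _) (Finset.mem_univ j)
        push_cast
        have : ((k j : ℕ):ℝ) ≤ (K:ℝ) := by exact_mod_cast this
        nlinarith
      calc (((m * k j).factorial : ℕ):ℝ) * Real.exp (((m * k j : ℕ):ℝ))
          ≤ Real.exp 1 * ((m * k j : ℕ):ℝ) * ((m * k j : ℕ):ℝ)^(m * k j) := h1
        _ ≤ c * ((m * k j : ℕ):ℝ)^(m * k j) := by
            rw [hcdef]
            have hp : (0:ℝ) ≤ ((m * k j : ℕ):ℝ)^(m * k j) := by positivity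
            have := mul_le_mul_of_nonneg_left hkjK (Real.exp_pos 1).le
            nlinarith
  have h1 : F * E ≤ c^N * ((m:ℝ)^(m*K) * P^m) := by
    calc F * E = ∏ j, ((((m * k j).factorial : ℕ):ℝ) * Real.exp (((m * k j : ℕ):ℝ))) := by
          rw [Finset.prod_mul_distrib, hEsum]
      _ ≤ ∏ j, (c * ((m * k j : ℕ):ℝ)^(m * k j)) :=
          Finset.prod_le_prod (fun j _ => by positivity) (fun j _ => perj j)
      _ = c^N * ((m:ℝ)^(m*K) * P^m) := by
          rw [Finset.prod_mul_distrib, Finset.prod_const, prodpow_eq, sum_mk k K m hK]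
          simp [Finset.card_univ]
          exact Or.inl (Or.inl rfl)
  have h2 : ((m*K:ℕ):ℝ)^(m*K) ≤ E * ((m*K).factorial:ℝ) := fact_pow_le _
  have hc : (0:ℝ) < (m:ℝ)^(m*K) * E := by positivity
  rw [← mul_le_mul_iff_of_pos_right hc]
  calc ((K:ℝ)^K)^m * ((m:ℝ)^(m*K) * E)
      = ((m*K:ℕ):ℝ)^(m*K) * E := by rw [KKpow_eq]; ring
    _ ≤ (E * ((m*K).factorial:ℝ)) * E := mul_le_mul_of_nonneg_right h2 hE0.le
    _ = A * (F * E) * E := by rw [← AF_eq k K m hK]; ring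
    _ ≤ A * (c^N * ((m:ℝ)^(m*K) * P^m)) * E := by
        have := mul_le_mul_of_nonneg_left h1 hA0
        exact mul_le_mul_of_nonneg_right this hE0.le
    _ = A * P^m * c^N * ((m:ℝ)^(m*K) * E) := by ring

end MBounds

theorem stmt_15 (N : ℕ) (hN : 2 ≤ N) (k : Fin N → ℕ) (hk : ∃ j, 0 < k j)
    (K : ℕ) (hK : K = ∑ j : Fin N, k j)
    (r : Fin N → ℝ) (hr : ∀ j, 0 < r j ∧ r j < 1)
    (ρ : ℝ)
    (hρ : ρ = Real.log ((∏ j : Fin N, (k j : ℝ) ^ k j) / (K : ℝ) ^ K) /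
        Real.log (∏ j : Fin N, r j ^ k j)) :
    ∀ s : ℝ,
      (ρ < s → Summable fun n : ℕ =>
        (Nat.multinomial Finset.univ (fun j : Fin N => (n + 1) * k j) : ℝ) *
          (∏ j : Fin N, r j ^ k j) ^ (((n : ℝ) + 1) * s)) ∧
      (s < ρ → ¬ Summable fun n : ℕ =>
        (Nat.multinomial Finset.univ (fun j : Fin N => (n + 1) * k j) : ℝ) *
          (∏ j : Fin N, r j ^ k j) ^ (((n : ℝ) + 1) * s)) := by
  obtain ⟨j0, hj0⟩ := hk
  have hKpos : 0 < K := by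
    rw [hK]
    exact lt_of_lt_of_le hj0 (Finset.single_le_sum (fun i _ => Nat.zero_le _) (Finset.mem_univ j0))
  set R := ∏ j : Fin N, r j ^ k j with hR
  set P := ∏ j : Fin N, (k j : ℝ) ^ k j with hP
  have hR0 : 0 < R := Finset.prod_pos (fun j _ => pow_pos (hr j).1 _)
  have hP0 : 0 < P := Finset.prod_pos (fun j _ => by
    rcases Nat.eq_zero_or_pos (k j) with h | h
    · simp [h]
    · have : (0:ℝ) < (k j : ℝ) := by exact_mod_cast h
      positivity)
  have hKK0 : (0:ℝ) < (K:ℝ)^K := by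
    have : (0:ℝ) < (K:ℝ) := by exact_mod_cast hKpos
    positivity
  have hlogR : Real.log R < 0 := by
    have hlog : Real.log R = ∑ j, (k j : ℝ) * Real.log (r j) := by
      rw [hR, Real.log_prod (fun j _ => (pow_pos (hr j).1 _).ne')]
      exact Finset.sum_congr rfl fun j _ => by rw [Real.log_pow]
    rw [hlog]
    have hlt : ∑ j, (k j:ℝ) * Real.log (r j) < ∑ _j : Fin N, (0:ℝ) := by
      apply Finset.sum_lt_sum
      · intro i _
        exact mul_nonpos_of_nonneg_of_nonpos (Nat.cast_nonneg _)
          (le_of_lt (Real.log_neg (hr i).1 (hr i).2))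
      · refine ⟨j0, Finset.mem_univ j0, ?_⟩
        have h1 := Real.log_neg (hr j0).1 (hr j0).2
        have h0 : (0:ℝ) < (k j0:ℝ) := by exact_mod_cast hj0
        nlinarith
    simpa using hlt
  intro s
  have hrpow : ∀ n : ℕ, R ^ (((n:ℝ)+1) * s) = (R ^ s) ^ (n+1) := by
    intro n
    rw [show ((n:ℝ)+1)*s = s * (((n+1:ℕ)):ℝ) by push_cast; ring,
      Real.rpow_mul hR0.le, Real.rpow_natCast]
  set x := R ^ s with hx
  have hx0 : 0 < x := Real.rpow_pos_of_pos hR0 s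
  set B := ((K:ℝ)^K) / P with hB
  have hB0 : 0 < B := div_pos hKK0 hP0
  set L := B * x with hL
  have hL0 : 0 < L := mul_pos hB0 hx0
  have hlogL : Real.log L = -(Real.log (P / (K:ℝ)^K)) + s * Real.log R := by
    rw [hL, hB, hx, Real.log_mul (by positivity) (by positivity),
      Real.log_div hKK0.ne' hP0.ne', Real.log_div hP0.ne' hKK0.ne',
      Real.log_rpow hR0]
    ring
  set f := fun n : ℕ =>
    (Nat.multinomial Finset.univ (fun j : Fin N => (n + 1) * k j) : ℝ) *
      R ^ (((n : ℝ) + 1) * s) with hf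
  have hf0 : ∀ n, 0 ≤ f n := fun n => by
    have : (0:ℝ) < R ^ (((n : ℝ) + 1) * s) := Real.rpow_pos_of_pos hR0 _
    have h2 : (0:ℝ) ≤ (Nat.multinomial Finset.univ (fun j : Fin N => (n + 1) * k j) : ℝ) :=
      Nat.cast_nonneg _
    positivity
  constructor
  · -- convergence
    intro hs
    have hL1 : L < 1 := by
      rw [← Real.log_neg_iff hL0, hlogL]
      have h1 : s * Real.log R < ρ * Real.log R := by
        exact mul_lt_mul_of_neg_right hs hlogR
      rw [hρ, div_mul_cancel₀ _ (ne_of_lt hlogR)] at h1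
      linarith
    have hu : Summable (fun n : ℕ => (n:ℝ)^1 * L^n) :=
      summable_pow_mul_geometric_of_norm_lt_one 1
        (by rw [Real.norm_eq_abs, abs_of_pos hL0]; exact hL1)
    have hu' : Summable (fun n : ℕ => (((n+1:ℕ)):ℝ)^1 * L^(n+1)) :=
      (summable_nat_add_iff (f := fun n : ℕ => (n:ℝ)^1 * L^n) 1).mpr hu
    have hg : Summable (fun n : ℕ => (Real.exp 1 * (K:ℝ)) * ((((n+1:ℕ)):ℝ)^1 * L^(n+1))) :=
      hu'.mul_left _
    apply Summable.of_nonneg_of_le hf0 _ hg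
    intro n
    rw [hf]
    simp only
    rw [hrpow n]
    have h := mult_ub k K (n+1) hK hKpos (by omega)
    set A := (Nat.multinomial Finset.univ (fun j : Fin N => (n + 1) * k j) : ℝ) with hAdef
    have hxp : (0:ℝ) < x^(n+1) := by positivity
    have hPp : (0:ℝ) < P^(n+1) := by positivity
    rw [← mul_le_mul_iff_of_pos_right hPp]
    calc A * x^(n+1) * P^(n+1) = (A * P^(n+1)) * x^(n+1) := by ring
      _ ≤ (Real.exp 1 * (((n+1)*K : ℕ):ℝ) * ((K:ℝ)^K)^(n+1)) * x^(n+1) :=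
          mul_le_mul_of_nonneg_right h hxp.le
      _ = Real.exp 1 * (K:ℝ) * ((((n+1:ℕ)):ℝ)^1 * L^(n+1)) * P^(n+1) := by
          rw [hL, hB, mul_pow, div_pow]
          push_cast
          field_simp
  · -- divergence
    intro hs hS
    have hL1 : 1 < L := by
      rw [← Real.log_pos_iff hL0.le, hlogL]
      have h1 : ρ * Real.log R < s * Real.log R := mul_lt_mul_of_neg_right hs hlogR
      rw [hρ, div_mul_cancel₀ _ (ne_of_lt hlogR)] at h1
      linarith
    set t := fun n : ℕ => (Real.exp 1 * (((n+1:ℕ)):ℝ) * (K:ℝ))^N * (1/L)^(n+1) with ht_def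
    have key : ∀ n, 1 ≤ f n * t n := by
      intro n
      have hlb := mult_lb k K (n+1) hK hKpos (by omega)
      set A := (Nat.multinomial Finset.univ (fun j : Fin N => (n + 1) * k j) : ℝ) with hAdef
      have hxp : (0:ℝ) < x^(n+1) := by positivity
      have hLp : (0:ℝ) < L^(n+1) := by positivity
      have hPp : (0:ℝ) < P^(n+1) := by positivity
      have h2 : L^(n+1) * P^(n+1) = ((K:ℝ)^K)^(n+1) * x^(n+1) := by
        rw [hL, hB, mul_pow, div_pow]
        field_simp
      rw [hf]
      simp only
      rw [hrpow n, ht_def]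
      rw [← mul_le_mul_iff_of_pos_right (show (0:ℝ) < L^(n+1) * P^(n+1) by positivity)]
      calc 1 * (L^(n+1) * P^(n+1)) = ((K:ℝ)^K)^(n+1) * x^(n+1) := by rw [h2]; ring
        _ ≤ (A * P^(n+1) * (Real.exp 1 * (((n+1:ℕ)):ℝ) * (K:ℝ))^N) * x^(n+1) :=
            mul_le_mul_of_nonneg_right hlb hxp.le
        _ = A * x^(n+1) *
              ((Real.exp 1 * (((n+1:ℕ)):ℝ) * (K:ℝ))^N * (1/L)^(n+1)) * (L^(n+1) * P^(n+1)) := by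
            have : (1/L)^(n+1) * L^(n+1) = 1 := by
              rw [div_pow, one_pow, div_mul_cancel₀]
              exact hLp.ne'
            linear_combination (-(A * x^(n+1) * (Real.exp 1 * (((n+1:ℕ)):ℝ) * (K:ℝ))^N * P^(n+1))) * this
    have h1L : (1:ℝ)/L < 1 := by
      rw [div_lt_one hL0]; exact hL1
    have h1L0 : (0:ℝ) < 1/L := by positivity
    have hu : Summable (fun n : ℕ => (n:ℝ)^N * (1/L)^n) :=
      summable_pow_mul_geometric_of_norm_lt_one N
        (by rw [Real.norm_eq_abs, abs_of_pos h1L0]; exact h1L)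
    have hu0 : Filter.Tendsto (fun n : ℕ => (n:ℝ)^N * (1/L)^n) Filter.atTop (nhds 0) :=
      hu.tendsto_atTop_zero
    have hu0' : Filter.Tendsto (fun n : ℕ => (((n+1:ℕ)):ℝ)^N * (1/L)^(n+1))
        Filter.atTop (nhds 0) := hu0.comp (Filter.tendsto_add_atTop_nat 1)
    have ht : Filter.Tendsto t Filter.atTop (nhds 0) := by
      have heq : t = fun n : ℕ =>
          (Real.exp 1 * (K:ℝ))^N * ((((n+1:ℕ)):ℝ)^N * (1/L)^(n+1)) := by
        funext n
        rw [ht_def]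
        ring
      rw [heq]
      simpa using hu0'.const_mul ((Real.exp 1 * (K:ℝ))^N)
    have hft : Filter.Tendsto (fun n => f n * t n) Filter.atTop (nhds 0) := by
      simpa using (hS.tendsto_atTop_zero).mul ht
    obtain ⟨n, hn⟩ := (hft.eventually_lt_const (by norm_num : (0:ℝ) < 1)).exists
    exact absurd (key n) (not_le.mpr hn)
end
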